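/- Suppose λ ∈ ρ + C, μ ∈ E, and set β = μ − λ. Then ‖β‖² ≥ (1/2)·Σ_{α ∈ Δ⁺, (α,μ)=0} |(β,α)| (the right-hand side equals (1/2)·nTr_{k_μ}|b|, half the normalized trace on the centralizer k_μ of the element b of the Cartan subalgebra corresponding to β). If equality holds, then μ ∈ C, λ − ρ(λ) = μ − ρ(μ), and λ = μ + ρ_μ (so the shift of the orbit of μ is the orbit of λ). -/

import Mathlib

open scoped RealInnerProductSpace
open Finset

namespace Magical

variable {E : Type*} [NormedAddCommGroup E] [InnerProductSpace ℝ E]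

/-- Reflection in the hyperplane orthogonal to `α`. -/
noncomputable def sA (α β : E) : E := β - (2 * ⟪β, α⟫ / ⟪α, α⟫) • α

lemma inner_sA_left (α x y : E) : ⟪sA α x, y⟫ = ⟪x, y⟫ - (2 * ⟪x, α⟫ / ⟪α, α⟫) * ⟪α, y⟫ := by
  simp [sA, inner_sub_left, real_inner_smul_left]

lemma sA_inner_self {α : E} (hα : ⟪α, α⟫ ≠ 0) (x : E) : ⟪sA α x, α⟫ = -⟪x, α⟫ := by
  rw [inner_sA_left]; field_simp; ring

lemma sA_sA {α : E} (hα : ⟪α, α⟫ ≠ 0) (x : E) : sA α (sA α x) = x := by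
  have h1 : (2 * ⟪sA α x, α⟫ / ⟪α, α⟫) = -(2 * ⟪x, α⟫ / ⟪α, α⟫) := by
    rw [sA_inner_self hα]; ring
  rw [sA, h1, sA, neg_smul]
  abel

lemma sA_adjoint (α x y : E) : ⟪sA α x, y⟫ = ⟪x, sA α y⟫ := by
  rw [inner_sA_left, sA, inner_sub_right, real_inner_smul_right, real_inner_comm α y]
  ring

lemma inner_sA_sA {α : E} (hα : ⟪α, α⟫ ≠ 0) (x y : E) : ⟪sA α x, sA α y⟫ = ⟪x, y⟫ := by
  rw [sA_adjoint, sA_sA hα]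

lemma norm_sA {α : E} (hα : ⟪α, α⟫ ≠ 0) (x : E) : ‖sA α x‖ = ‖x‖ := by
  have h := inner_sA_sA hα x x
  rw [real_inner_self_eq_norm_sq, real_inner_self_eq_norm_sq] at h
  have h3 : |‖sA α x‖| = |‖x‖| := by
    rw [← Real.sqrt_sq_eq_abs, ← Real.sqrt_sq_eq_abs, h]
  rwa [abs_of_nonneg (norm_nonneg _), abs_of_nonneg (norm_nonneg _)] at h3

lemma sA_self {α : E} (hα : ⟪α, α⟫ ≠ 0) : sA α α = -α := by
  rw [sA, mul_div_assoc, div_self hα, mul_one, two_smul]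
  abel

lemma sA_neg (α x : E) : sA α (-x) = -(sA α x) := by
  simp only [sA, inner_neg_left, mul_neg, neg_mul, neg_div, neg_smul]
  abel

lemma sum_sA (s : Finset E) (α : E) : ∑ β ∈ s, sA α β = sA α (∑ β ∈ s, β) := by
  simp only [sA]
  rw [Finset.sum_sub_distrib, ← Finset.sum_smul]
  congr 2
  rw [sum_inner (𝕜 := ℝ), Finset.mul_sum, Finset.sum_div]

/-- Abstract reduced crystallographic root system (without fixed regular vector). -/
structure RS (Δ : Finset E) : Prop where
  h0 : (0 : E) ∉ Δ
  red : ∀ α ∈ Δ, ∀ t : ℝ, t • α ∈ Δ → t = 1 ∨ t = -1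
  rfl' : ∀ α ∈ Δ, ∀ β ∈ Δ, sA α β ∈ Δ
  crys : ∀ α ∈ Δ, ∀ β ∈ Δ, ∃ n : ℤ, 2 * ⟪β, α⟫ / ⟪α, α⟫ = (n : ℝ)

namespace RS

variable {Δ : Finset E} {v : E}

lemma nz (h : RS Δ) {α : E} (hα : α ∈ Δ) : α ≠ 0 := fun h0 => h.h0 (h0 ▸ hα)

lemma ipos (h : RS Δ) {α : E} (hα : α ∈ Δ) : 0 < ⟪α, α⟫ :=
  real_inner_self_nonneg.lt_of_ne (fun hh => (h.nz hα) (inner_self_eq_zero.mp hh.symm))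

lemma neg_mem (h : RS Δ) {α : E} (hα : α ∈ Δ) : -α ∈ Δ := by
  have := h.rfl' α hα α hα
  rwa [sA_self (h.ipos hα).ne'] at this

lemma sub (h : RS Δ) (μ : E) : RS (Δ.filter fun α => ⟪α, μ⟫ = 0) where
  h0 := fun hh => h.h0 (mem_filter.mp hh).1
  red := fun α hα t ht => h.red α (mem_filter.mp hα).1 t (mem_filter.mp ht).1
  rfl' := by
    intro α hα β hβ
    rw [mem_filter] at hα hβ ⊢
    refine ⟨h.rfl' α hα.1 β hβ.1, ?_⟩
    rw [inner_sA_left, hα.2, hβ.2, mul_zero, sub_zero]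
  crys := fun α hα β hβ => h.crys α (mem_filter.mp hα).1 β (mem_filter.mp hβ).1

/-- difference of non-proportional roots with positive inner product is a root -/
lemma sub_mem (h : RS Δ) {α β : E} (hα : α ∈ Δ) (hβ : β ∈ Δ) (hne : β ≠ α) (hne' : β ≠ -α)
    (hpos : 0 < ⟪β, α⟫) : β - α ∈ Δ := by
  obtain ⟨n, hn⟩ := h.crys α hα β hβ
  obtain ⟨m, hm⟩ := h.crys β hβ α hα
  have hαα := h.ipos hα
  have hββ := h.ipos hβ
  have hpos' : 0 < ⟪α, β⟫ := by rw [real_inner_comm]; exact hpos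
  have hn1 : 1 ≤ n := by
    have : (0 : ℝ) < (n : ℝ) := by
      rw [← hn]; exact div_pos (by linarith) hαα
    exact_mod_cast this
  have hm1 : 1 ≤ m := by
    have : (0 : ℝ) < (m : ℝ) := by
      rw [← hm]; exact div_pos (by linarith) hββ
    exact_mod_cast this
  -- strict Cauchy-Schwarz
  have hCS : ⟪β, α⟫ * ⟪β, α⟫ < ⟪β, β⟫ * ⟪α, α⟫ := by
    rcases lt_or_eq_of_le (real_inner_mul_inner_self_le β α) with hlt | heq
    · exact hlt
    · exfalso
      have habs : ‖(⟪α, β⟫ : ℝ)‖ = ‖α‖ * ‖β‖ := by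
        rw [Real.norm_eq_abs]
        have h1 : |(⟪α, β⟫ : ℝ)| ^ 2 = (‖α‖ * ‖β‖) ^ 2 := by
          rw [sq_abs, mul_pow, ← real_inner_self_eq_norm_sq, ← real_inner_self_eq_norm_sq]
          have hcomm : (⟪α, β⟫ : ℝ) = ⟪β, α⟫ := real_inner_comm β α
          nlinarith [heq, hcomm]
        have h2 : (0:ℝ) ≤ |(⟪α, β⟫ : ℝ)| := abs_nonneg _
        have h3 : (0:ℝ) ≤ ‖α‖ * ‖β‖ := by positivity
        nlinarith
      obtain ⟨r, hr0, hr⟩ := (norm_inner_eq_norm_iff (𝕜 := ℝ) (h.nz hα) (h.nz hβ)).mp habs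
      rcases h.red α hα r (hr ▸ hβ) with rfl | rfl
      · rw [one_smul] at hr; exact hne hr
      · rw [neg_one_smul] at hr; exact hne' hr
  have hnm : n * m ≤ 3 := by
    have hprod : ((n : ℝ)) * (m : ℝ) < 4 := by
      rw [← hn, ← hm]
      have hcomm : (⟪α, β⟫ : ℝ) = ⟪β, α⟫ := real_inner_comm β α
      rw [hcomm, div_mul_div_comm, div_lt_iff₀ (by positivity)]
      nlinarith
    have : ((n * m : ℤ) : ℝ) < 4 := by push_cast; exact hprod
    have : (n * m : ℤ) < 4 := by exact_mod_cast this
    omega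
  rcases eq_or_lt_of_le hn1 with hn2 | hn2
  · have := h.rfl' α hα β hβ
    rwa [sA, hn, ← hn2, Int.cast_one, one_smul] at this
  · have hm2 : m = 1 := by nlinarith
    have := h.rfl' β hβ α hα
    rw [sA, hm, hm2, Int.cast_one, one_smul] at this
    have := h.neg_mem this
    rwa [neg_sub] at this

end RS

/-- simple root for the positive system determined by `v` -/
def Simple (Δ : Finset E) (v α : E) : Prop :=
  α ∈ Δ ∧ 0 < ⟪α, v⟫ ∧ ∀ β ∈ Δ, ∀ γ ∈ Δ, 0 < ⟪β, v⟫ → 0 < ⟪γ, v⟫ → α ≠ β + γ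

namespace RS

variable {Δ : Finset E} {v : E}

lemma nosum (h : RS Δ) (hv : ∀ α ∈ Δ, ⟪α, v⟫ ≠ 0) {α : E} (hs : Simple Δ v α) :
    ∀ n : ℕ, ∀ β ∈ Δ, ∀ γ ∈ Δ, 0 < ⟪β, v⟫ → 0 < ⟪γ, v⟫ → β ≠ α → γ ≠ α →
      β + γ ≠ (n : ℝ) • α := by
  obtain ⟨hαΔ, hαv, hαs⟩ := hs
  intro n
  induction n with
  | zero =>
    intro β hβ γ hγ hbv hgv _ _ hEq
    rw [Nat.cast_zero, zero_smul] at hEq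
    have h1 : (0:ℝ) < ⟪β + γ, v⟫ := by rw [inner_add_left]; linarith
    rw [hEq, inner_zero_left] at h1; exact lt_irrefl _ h1
  | succ n ih =>
    have key : ∀ β ∈ Δ, ∀ γ ∈ Δ, 0 < ⟪β, v⟫ → 0 < ⟪γ, v⟫ → β ≠ α → γ ≠ α →
        β + γ = ((n + 1 : ℕ) : ℝ) • α → 0 < ⟪β, α⟫ → False := by
      intro β hβ γ hγ hbv hgv hbne hgne hEq hba
      have hbna : β ≠ -α := by
        rintro rfl; rw [inner_neg_left] at hbv; linarith
      have hsub : β - α ∈ Δ := h.sub_mem hαΔ hβ hbne hbna hba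
      rcases (hv _ hsub).lt_or_gt with hneg | hpos
      · have h1 : α - β ∈ Δ := by
          have := h.neg_mem hsub; rwa [neg_sub] at this
        have h2 : 0 < ⟪α - β, v⟫ := by
          have : ⟪α - β, v⟫ = -⟪β - α, v⟫ := by
            rw [← inner_neg_left, neg_sub]
          linarith [this]
        exact hαs β hβ (α - β) h1 hbv h2 (by abel)
      · have hne2 : β - α ≠ α := by
          intro hh
          have hβ2 : (2:ℝ) • α ∈ Δ := by
            rw [two_smul]
            have hba2 : β = α + α := sub_eq_iff_eq_add'.mp hh
            rwa [← hba2]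
          rcases h.red α hαΔ 2 hβ2 with h2 | h2 <;> norm_num at h2
        have hEq' : (β - α) + γ = (n : ℝ) • α := by
          have hc : ((n + 1 : ℕ) : ℝ) = (n : ℝ) + 1 := by push_cast; ring
          rw [hc, add_smul, one_smul] at hEq
          rw [sub_add_eq_add_sub, hEq]; abel
        exact ih (β - α) hsub γ hγ hpos hgv hne2 hgne hEq'
    intro β hβ γ hγ hbv hgv hbne hgne hEq
    have hαα := h.ipos hαΔ
    have hsum : ⟪β, α⟫ + ⟪γ, α⟫ = ((n + 1 : ℕ) : ℝ) * ⟪α, α⟫ := by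
      rw [← inner_add_left, hEq, real_inner_smul_left]
    have hsp : 0 < ((n + 1 : ℕ) : ℝ) * ⟪α, α⟫ := by positivity
    rcases lt_or_ge 0 ⟪β, α⟫ with hb | hb
    · exact key β hβ γ hγ hbv hgv hbne hgne hEq hb
    · have hg : 0 < ⟪γ, α⟫ := by linarith
      exact key γ hγ β hβ hgv hbv hgne hbne (by rw [add_comm]; exact hEq) hg

/-- a simple reflection keeps other positive roots positive -/
lemma refl_pos (h : RS Δ) (hv : ∀ α ∈ Δ, ⟪α, v⟫ ≠ 0) {α : E} (hs : Simple Δ v α)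
    {β : E} (hβ : β ∈ Δ) (hbv : 0 < ⟪β, v⟫) (hne : β ≠ α) : 0 < ⟪sA α β, v⟫ := by
  obtain ⟨hαΔ, hαv, hαs⟩ := id hs
  have hαα := h.ipos hαΔ
  have hmem : sA α β ∈ Δ := h.rfl' α hαΔ β hβ
  rcases (hv _ hmem).lt_or_gt with hneg | hpos
  · exfalso
    set γ : E := -(sA α β) with hγdef
    have hγ : γ ∈ Δ := h.neg_mem hmem
    have hγv : 0 < ⟪γ, v⟫ := by rw [hγdef, inner_neg_left]; linarith
    obtain ⟨n, hn⟩ := h.crys α hαΔ β hβ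
    have hEq : β + γ = (n : ℝ) • α := by
      rw [hγdef, sA, ← hn]; abel
    have hnpos : 0 < n := by
      have h1 : 0 < ⟪β + γ, v⟫ := by rw [inner_add_left]; linarith
      rw [hEq, real_inner_smul_left] at h1
      have : (0:ℝ) < (n:ℝ) := by
        by_contra hcon
        push_neg at hcon
        nlinarith
      exact_mod_cast this
    have hγa : γ ≠ α := by
      intro hh
      have h2 : sA α β = -α := neg_eq_iff_eq_neg.mp (hγdef.symm.trans hh)
      have h3 : sA α (sA α β) = sA α (-α) := by rw [h2]
      rw [sA_sA hαα.ne', sA_neg, sA_self hαα.ne', neg_neg] at h3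
      exact hne h3
    have hcast : ((n.toNat : ℕ) : ℝ) = (n : ℝ) := by
      rw [← Int.cast_natCast]
      norm_cast
      omega
    exact h.nosum hv ⟨hαΔ, hαv, hαs⟩ n.toNat β hβ γ hγ hbv hγv hne hγa
      (by rw [hcast]; exact hEq)
  · exact hpos

lemma sum_T (h : RS Δ) {α : E} (hα : α ∈ Δ) :
    ∑ β ∈ (Δ.filter fun β => 0 < ⟪β, v⟫).filter (fun β => 0 < ⟪sA α β, v⟫), ⟪β, α⟫ = 0 := by
  have hαα := h.ipos hα
  apply Finset.sum_involution (g := fun β _ => sA α β)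
  · intro β _
    rw [sA_inner_self hαα.ne']; ring
  · intro β _ hfβ heq
    apply hfβ
    have h1 : (2 * ⟪β, α⟫ / ⟪α, α⟫) • α = 0 := by
      have := heq
      rw [sA, sub_eq_self] at this
      exact this
    rcases smul_eq_zero.mp h1 with hc | h0
    · rcases div_eq_zero_iff.mp hc with h2 | h2
      · linarith
      · exact absurd h2 hαα.ne'
    · exact absurd h0 (h.nz hα)
  · intro β hβ
    simp only [mem_filter] at hβ ⊢
    exact ⟨⟨h.rfl' α hα β hβ.1.1, hβ.2⟩, by rw [sA_sA hαα.ne']; exact hβ.1.2⟩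
  · intro β _
    exact sA_sA hαα.ne' β

lemma mem_S_self (h : RS Δ) {α : E} (hα : α ∈ Δ) (hav : 0 < ⟪α, v⟫) :
    α ∈ (Δ.filter fun β => 0 < ⟪β, v⟫).filter (fun β => ¬ 0 < ⟪sA α β, v⟫) := by
  have hαα := h.ipos hα
  simp only [mem_filter]
  refine ⟨⟨hα, hav⟩, ?_⟩
  rw [sA_self hαα.ne', inner_neg_left, not_lt]
  linarith

lemma S_nonneg (h : RS Δ) (hv : ∀ α ∈ Δ, ⟪α, v⟫ ≠ 0) {α : E} (hα : α ∈ Δ) (hav : 0 < ⟪α, v⟫) :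
    ∀ β ∈ (Δ.filter fun β => 0 < ⟪β, v⟫).filter (fun β => ¬ 0 < ⟪sA α β, v⟫), 0 ≤ ⟪β, α⟫ := by
  have hαα := h.ipos hα
  intro β hβ
  simp only [mem_filter, not_lt] at hβ
  obtain ⟨⟨hβΔ, hbv⟩, hsneg⟩ := hβ
  have hne := hv _ (h.rfl' α hα β hβΔ)
  have hlt : ⟪sA α β, v⟫ < 0 := lt_of_le_of_ne hsneg hne
  rw [inner_sA_left] at hlt
  by_contra hcon
  push_neg at hcon
  have hcneg : 2 * ⟪β, α⟫ / ⟪α, α⟫ < 0 := div_neg_of_neg_of_pos (by linarith) hαα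
  nlinarith

lemma sum_pos_inner_ge (h : RS Δ) (hv : ∀ α ∈ Δ, ⟪α, v⟫ ≠ 0) {α : E} (hα : α ∈ Δ)
    (hav : 0 < ⟪α, v⟫) :
    ⟪α, α⟫ ≤ ∑ β ∈ Δ.filter (fun β => 0 < ⟪β, v⟫), ⟪β, α⟫ := by
  classical
  rw [← Finset.sum_filter_add_sum_filter_not (Δ.filter fun β => 0 < ⟪β, v⟫)
    (fun β => 0 < ⟪sA α β, v⟫) (fun β => ⟪β, α⟫)]
  rw [h.sum_T hα, zero_add]
  exact Finset.single_le_sum (f := fun β => ⟪β, α⟫) (h.S_nonneg hv hα hav) (h.mem_S_self hα hav)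

lemma sum_pos_inner_simple (h : RS Δ) (hv : ∀ α ∈ Δ, ⟪α, v⟫ ≠ 0) {α : E}
    (hs : Simple Δ v α) :
    ∑ β ∈ Δ.filter (fun β => 0 < ⟪β, v⟫), ⟪β, α⟫ = ⟪α, α⟫ := by
  classical
  obtain ⟨hα, hav, -⟩ := id hs
  rw [← Finset.sum_filter_add_sum_filter_not (Δ.filter fun β => 0 < ⟪β, v⟫)
    (fun β => 0 < ⟪sA α β, v⟫) (fun β => ⟪β, α⟫)]
  rw [h.sum_T hα, zero_add]
  have hSeq : (Δ.filter fun β => 0 < ⟪β, v⟫).filter (fun β => ¬ 0 < ⟪sA α β, v⟫) = {α} := by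
    apply Finset.Subset.antisymm
    · intro β hβ
      simp only [mem_filter] at hβ
      rw [Finset.mem_singleton]
      by_contra hne
      exact hβ.2 (h.refl_pos hv hs hβ.1.1 hβ.1.2 hne)
    · intro β hβ
      rw [Finset.mem_singleton] at hβ
      subst hβ
      exact h.mem_S_self hα hav
  rw [hSeq, Finset.sum_singleton]

lemma obtuse (h : RS Δ) (hv : ∀ α ∈ Δ, ⟪α, v⟫ ≠ 0) {a b : E} (ha : Simple Δ v a)
    (hb : Simple Δ v b) (hne : a ≠ b) : ⟪a, b⟫ ≤ 0 := by
  by_contra hpos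
  push_neg at hpos
  have hba : b ≠ -a := by
    rintro rfl
    have := hb.2.1
    rw [inner_neg_left] at this
    linarith [ha.2.1]
  have hsub : b - a ∈ Δ := h.sub_mem ha.1 hb.1 hne.symm hba (by rwa [real_inner_comm])
  rcases (hv _ hsub).lt_or_gt with hneg | hpos2
  · have h1 : a - b ∈ Δ := by
      have := h.neg_mem hsub; rwa [neg_sub] at this
    have h2 : 0 < ⟪a - b, v⟫ := by
      have h3 : ⟪a - b, v⟫ = -⟪b - a, v⟫ := by rw [← inner_neg_left, neg_sub]
      linarith [h3]
    exact ha.2.2 b hb.1 (a - b) h1 hb.2.1 h2 (by abel)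
  · exact hb.2.2 a ha.1 (b - a) hsub ha.2.1 hpos2 (by abel)

lemma simple_induction (h : RS Δ) (p : E → Prop)
    (hsimple : ∀ a, Simple Δ v a → p a)
    (hadd : ∀ β γ, β ∈ Δ → γ ∈ Δ → 0 < ⟪β, v⟫ → 0 < ⟪γ, v⟫ → p β → p γ → p (β + γ)) :
    ∀ β ∈ Δ, 0 < ⟪β, v⟫ → p β := by
  classical
  have H : ∀ n : ℕ, ∀ β ∈ Δ, 0 < ⟪β, v⟫ →
      (Δ.filter fun γ => 0 < ⟪γ, v⟫ ∧ ⟪γ, v⟫ < ⟪β, v⟫).card = n → p β := by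
    intro n
    induction n using Nat.strong_induction_on with
    | _ n ih =>
    intro β hβ hbv hcard
    by_cases hs : Simple Δ v β
    · exact hsimple β hs
    · have hdec : ∃ β₁ ∈ Δ, ∃ β₂ ∈ Δ, 0 < ⟪β₁, v⟫ ∧ 0 < ⟪β₂, v⟫ ∧ β = β₁ + β₂ := by
        by_contra hno
        push_neg at hno
        exact hs ⟨hβ, hbv, fun β₁ h1 β₂ h2 hv1 hv2 heq => hno β₁ h1 β₂ h2 hv1 hv2 heq⟩
      obtain ⟨β₁, h1, β₂, h2, hw1, hw2, rfl⟩ := hdec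
      have hv12 : ⟪β₁ + β₂, v⟫ = ⟪β₁, v⟫ + ⟪β₂, v⟫ := inner_add_left _ _ _
      have hkey : ∀ γ, γ ∈ Δ → 0 < ⟪γ, v⟫ → ⟪γ, v⟫ < ⟪β₁ + β₂, v⟫ →
          (Δ.filter fun δ => 0 < ⟪δ, v⟫ ∧ ⟪δ, v⟫ < ⟪γ, v⟫).card < n := by
        intro γ hγ hγv hγlt
        rw [← hcard]
        apply Finset.card_lt_card
        rw [Finset.ssubset_iff_of_subset]
        · exact ⟨γ, mem_filter.mpr ⟨hγ, hγv, hγlt⟩,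
            fun hmem => by simp only [mem_filter] at hmem; exact lt_irrefl _ hmem.2.2⟩
        · intro x hx
          simp only [mem_filter] at hx ⊢
          exact ⟨hx.1, hx.2.1, lt_trans hx.2.2 hγlt⟩
      exact hadd β₁ β₂ h1 h2 hw1 hw2
        (ih _ (hkey β₁ h1 hw1 (by rw [hv12]; linarith)) β₁ h1 hw1 rfl)
        (ih _ (hkey β₂ h2 hw2 (by rw [hv12]; linarith)) β₂ h2 hw2 rfl)
  exact fun β hβ hbv => H _ β hβ hbv rfl

lemma pos_inner_nonneg_of_simple (h : RS Δ) (x : E)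
    (hx : ∀ a, Simple Δ v a → 0 ≤ ⟪x, a⟫) :
    ∀ β ∈ Δ, 0 < ⟪β, v⟫ → 0 ≤ ⟪x, β⟫ :=
  h.simple_induction (fun β => 0 ≤ ⟪x, β⟫) hx
    (fun β γ _ _ _ _ h1 h2 => by
      show (0:ℝ) ≤ ⟪x, β + γ⟫
      rw [inner_add_right]
      have h1' : (0:ℝ) ≤ ⟪x, β⟫ := h1
      have h2' : (0:ℝ) ≤ ⟪x, γ⟫ := h2
      linarith)

lemma pos_mem_span (h : RS Δ) :
    ∀ β ∈ Δ, 0 < ⟪β, v⟫ → β ∈ Submodule.span ℝ {a : E | Simple Δ v a} :=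
  h.simple_induction _ (fun a ha => Submodule.subset_span ha)
    (fun β γ _ _ _ _ h1 h2 => Submodule.add_mem _ h1 h2)

end RS

/-- Stieltjes-type lemma: a vector in the span of pairwise-obtuse vectors pairing
nonnegatively with each of them is a nonnegative combination. -/
lemma stieltjes (S : Finset E) (hob : ∀ a ∈ S, ∀ b ∈ S, a ≠ b → ⟪a, b⟫ ≤ 0)
    (y : E) (hy : y ∈ Submodule.span ℝ (S : Set E)) (hdom : ∀ a ∈ S, 0 ≤ ⟪y, a⟫) :
    ∃ c : E → ℝ, (∀ a ∈ S, 0 ≤ c a) ∧ y = ∑ a ∈ S, c a • a := by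
  classical
  obtain ⟨f, -, hf⟩ := Submodule.mem_span_finset.mp hy
  set c : E → ℝ := fun a => max (f a) 0 with hc
  set d : E → ℝ := fun a => max (-f a) 0 with hd
  have hcd : ∀ a, f a = c a - d a := fun a => (max_zero_sub_max_neg_zero_eq_self (f a)).symm
  set yp := ∑ a ∈ S, c a • a with hyp
  set ym := ∑ a ∈ S, d a • a with hym
  have hy' : y = yp - ym := by
    rw [← hf, hyp, hym, ← Finset.sum_sub_distrib]
    apply Finset.sum_congr rfl
    intro a _
    rw [← sub_smul, ← hcd]
  have h1 : ⟪yp, ym⟫ ≤ 0 := by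
    rw [hyp, sum_inner (𝕜 := ℝ)]
    apply Finset.sum_nonpos
    intro a ha
    rw [real_inner_smul_left, hym, inner_sum (𝕜 := ℝ)]
    rcases le_or_gt (f a) 0 with hfa | hfa
    · have hca : c a = 0 := by rw [hc]; simp [hfa]
      rw [hca, zero_mul]
    · apply mul_nonpos_of_nonneg_of_nonpos (le_max_right _ _)
      apply Finset.sum_nonpos
      intro b hb
      rw [real_inner_smul_right]
      rcases eq_or_ne b a with rfl | hne
      · have hdb : d b = 0 := by rw [hd]; simp; linarith
        rw [hdb, zero_mul]
      · exact mul_nonpos_of_nonneg_of_nonpos (le_max_right _ _) (hob a ha b hb hne.symm)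
  have h2 : 0 ≤ ⟪y, ym⟫ := by
    rw [hym, inner_sum (𝕜 := ℝ)]
    apply Finset.sum_nonneg
    intro b hb
    rw [real_inner_smul_right]
    exact mul_nonneg (le_max_right _ _) (hdom b hb)
  have h3 : ⟪ym, ym⟫ ≤ 0 := by
    have hymeq : ym = yp - y := by rw [hy']; abel
    calc ⟪ym, ym⟫ = ⟪yp - y, ym⟫ := by rw [← hymeq]
    _ = ⟪yp, ym⟫ - ⟪y, ym⟫ := inner_sub_left _ _ _
    _ ≤ 0 := by linarith
  have hym0 : ym = 0 := by
    have h4 : ⟪ym, ym⟫ = 0 := le_antisymm h3 real_inner_self_nonneg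
    exact inner_self_eq_zero.mp h4
  exact ⟨c, fun a _ => le_max_right _ _, by rw [hy', hym0, sub_zero]⟩


lemma RS.refl_pos_iff {Δ : Finset E} {v : E} (h : RS Δ) (hv : ∀ α ∈ Δ, ⟪α, v⟫ ≠ 0)
    {a : E} (hs : Simple Δ v a) {α : E} (hα : α ∈ Δ) (hne : α ≠ a) (hne' : α ≠ -a) :
    0 < ⟪sA a α, v⟫ ↔ 0 < ⟪α, v⟫ := by
  constructor
  · intro hpos
    by_contra hcon
    have hlt : ⟪α, v⟫ < 0 := lt_of_le_of_ne (not_lt.mp hcon) (hv α hα)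
    have h1 : -α ∈ Δ := h.neg_mem hα
    have h2 : 0 < ⟪-α, v⟫ := by rw [inner_neg_left]; linarith
    have h3 : (-α : E) ≠ a := fun hh => hne' (neg_eq_iff_eq_neg.mp hh)
    have h4 := h.refl_pos hv hs h1 h2 h3
    rw [sA_neg, inner_neg_left] at h4
    linarith
  · intro hpos
    exact h.refl_pos hv hs hα hpos hne

lemma RS.rho_norm_eq {Δ : Finset E} (h : RS Δ) : ∀ n : ℕ, ∀ v v' : E,
    (∀ α ∈ Δ, ⟪α, v⟫ ≠ 0) → (∀ α ∈ Δ, ⟪α, v'⟫ ≠ 0) →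
    (Δ.filter fun α => 0 < ⟪α, v⟫ ∧ ⟪α, v'⟫ < 0).card = n →
    ‖∑ α ∈ Δ.filter fun α => 0 < ⟪α, v⟫, α‖ = ‖∑ α ∈ Δ.filter fun α => 0 < ⟪α, v'⟫, α‖ := by
  classical
  intro n
  induction n using Nat.strong_induction_on with
  | _ n ih =>
  intro v v' hv hv' hcard
  rcases Nat.eq_zero_or_pos n with rfl | hn
  · have hempty : Δ.filter (fun α => 0 < ⟪α, v⟫ ∧ ⟪α, v'⟫ < 0) = ∅ := card_eq_zero.mp hcard
    have hnomem : ∀ α ∈ Δ, ¬(0 < ⟪α, v⟫ ∧ ⟪α, v'⟫ < 0) := by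
      intro α hα hmem
      have hin : α ∈ Δ.filter (fun α => 0 < ⟪α, v⟫ ∧ ⟪α, v'⟫ < 0) :=
        mem_filter.mpr ⟨hα, hmem⟩
      rw [hempty] at hin
      exact absurd hin (notMem_empty α)
    have hsets : Δ.filter (fun α => 0 < ⟪α, v⟫) = Δ.filter (fun α => 0 < ⟪α, v'⟫) := by
      ext α
      simp only [mem_filter]
      constructor
      · rintro ⟨hαΔ, hpos⟩
        refine ⟨hαΔ, ?_⟩
        rcases (hv' α hαΔ).lt_or_gt with hneg | hp
        · exact absurd (⟨hpos, hneg⟩ : _ ∧ _) (hnomem α hαΔ)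
        · exact hp
      · rintro ⟨hαΔ, hpos⟩
        refine ⟨hαΔ, ?_⟩
        rcases (hv α hαΔ).lt_or_gt with hneg | hp
        · exfalso
          refine hnomem (-α) (h.neg_mem hαΔ) ⟨?_, ?_⟩
          · rw [inner_neg_left]; linarith
          · rw [inner_neg_left]; linarith
        · exact hp
    rw [hsets]
  · have hex : ∃ a, Simple Δ v a ∧ ⟪a, v'⟫ < 0 := by
      by_contra hno
      push_neg at hno
      have hD : Δ.filter (fun α => 0 < ⟪α, v⟫ ∧ ⟪α, v'⟫ < 0) = ∅ := by
        rw [Finset.filter_eq_empty_iff]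
        rintro α hα ⟨hpos, hneg⟩
        have hx : ∀ a, Simple Δ v a → 0 ≤ ⟪v', a⟫ := fun a hsa =>
          (real_inner_comm v' a) ▸ (hno a hsa)
        have h1 := h.pos_inner_nonneg_of_simple v' hx α hα hpos
        have h2 : ⟪v', α⟫ = ⟪α, v'⟫ := real_inner_comm α v'
        linarith
      rw [hD] at hcard
      simp at hcard
      omega
    obtain ⟨a, hsa, hav'⟩ := hex
    have haΔ := hsa.1
    have hav := hsa.2.1
    have haa := h.ipos haΔ
    set v₁ := sA a v with hv₁def
    have hkey : ∀ x : E, ⟪x, v₁⟫ = ⟪sA a x, v⟫ := fun x => (sA_adjoint a x v).symm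
    have hreg1 : ∀ α ∈ Δ, ⟪α, v₁⟫ ≠ 0 := by
      intro α hα
      rw [hkey]
      exact hv _ (h.rfl' a haΔ α hα)
    have hsum1 : ∑ α ∈ Δ.filter (fun α => 0 < ⟪α, v⟫), sA a α
        = ∑ α ∈ Δ.filter (fun α => 0 < ⟪α, v₁⟫), α := by
      refine Finset.sum_nbij' (i := fun α => sA a α) (j := fun α => sA a α) ?_ ?_ ?_ ?_ ?_
      · intro α hα
        simp only [mem_filter] at hα ⊢
        refine ⟨h.rfl' a haΔ α hα.1, ?_⟩
        rw [hkey, sA_sA haa.ne']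
        exact hα.2
      · intro α hα
        simp only [mem_filter] at hα ⊢
        refine ⟨h.rfl' a haΔ α hα.1, ?_⟩
        rw [← hkey]
        exact hα.2
      · intro α _
        exact sA_sA haa.ne' α
      · intro α _
        exact sA_sA haa.ne' α
      · intro α _
        rfl
    have hnorm1 : ‖∑ α ∈ Δ.filter (fun α => 0 < ⟪α, v⟫), α‖
        = ‖∑ α ∈ Δ.filter (fun α => 0 < ⟪α, v₁⟫), α‖ := by
      rw [← hsum1, sum_sA, norm_sA haa.ne']
    have hmema : a ∈ Δ.filter (fun α => 0 < ⟪α, v⟫ ∧ ⟪α, v'⟫ < 0) :=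
      mem_filter.mpr ⟨haΔ, hav, hav'⟩
    have hDeq : Δ.filter (fun α => 0 < ⟪α, v₁⟫ ∧ ⟪α, v'⟫ < 0)
        = (Δ.filter (fun α => 0 < ⟪α, v⟫ ∧ ⟪α, v'⟫ < 0)).erase a := by
      ext α
      simp only [Finset.mem_erase, mem_filter]
      constructor
      · rintro ⟨hαΔ, hpos1, hneg⟩
        have hαa : α ≠ a := by
          rintro rfl
          rw [hkey, sA_self haa.ne', inner_neg_left] at hpos1
          linarith
        have hαna : α ≠ -a := by
          rintro rfl
          rw [inner_neg_left] at hneg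
          linarith
        rw [hkey] at hpos1
        exact ⟨hαa, hαΔ, (h.refl_pos_iff hv hsa hαΔ hαa hαna).mp hpos1, hneg⟩
      · rintro ⟨hαa, hαΔ, hpos, hneg⟩
        have hαna : α ≠ -a := by
          rintro rfl
          rw [inner_neg_left] at hpos
          linarith
        refine ⟨hαΔ, ?_, hneg⟩
        rw [hkey]
        exact (h.refl_pos_iff hv hsa hαΔ hαa hαna).mpr hpos
    have hcard1 : (Δ.filter (fun α => 0 < ⟪α, v₁⟫ ∧ ⟪α, v'⟫ < 0)).card = n - 1 := by
      rw [hDeq, Finset.card_erase_of_mem hmema, hcard]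
    rw [hnorm1]
    exact ih (n - 1) (by omega) v₁ v' hreg1 hv' hcard1

lemma RS.core {Δ : Finset E} {v : E} [FiniteDimensional ℝ E] (h : RS Δ)
    (hv : ∀ α ∈ Δ, ⟪α, v⟫ ≠ 0)
    (lam : E) (hlam : ∀ α ∈ Δ, 0 < ⟪α, v⟫ → (2:ℝ)⁻¹ * ⟪α, α⟫ ≤ ⟪lam, α⟫) (μ : E) :
    0 ≤ ‖μ - lam‖ ^ 2 + ⟪μ - lam, (2:ℝ)⁻¹ • ∑ α ∈ (Δ.filter fun α => ⟪α, μ⟫ = 0).filter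
        (fun α => 0 < ⟪α, v⟫), α⟫ ∧
    ‖(2:ℝ)⁻¹ • ∑ α ∈ (Δ.filter fun α => ⟪α, μ⟫ = 0).filter (fun α => 0 < ⟪α, v⟫), α‖ ^ 2
      ≤ ‖μ - lam‖ ^ 2 ∧
    (‖μ - lam‖ ^ 2 + ⟪μ - lam, (2:ℝ)⁻¹ • ∑ α ∈ (Δ.filter fun α => ⟪α, μ⟫ = 0).filter
        (fun α => 0 < ⟪α, v⟫), α⟫ = 0 →
      lam = μ + (2:ℝ)⁻¹ • ∑ α ∈ (Δ.filter fun α => ⟪α, μ⟫ = 0).filter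
        (fun α => 0 < ⟪α, v⟫), α) := by
  classical
  set Δμ := Δ.filter fun α => ⟪α, μ⟫ = 0 with hΔμdef
  have hΔμ : RS Δμ := h.sub μ
  set ρμ : E := (2:ℝ)⁻¹ • ∑ α ∈ Δμ.filter (fun α => 0 < ⟪α, v⟫), α with hρμdef
  have hvμ : ∀ α ∈ Δμ, ⟪α, v⟫ ≠ 0 := fun α hα => hv α (mem_filter.mp hα).1
  set S : Finset E := (Δμ.filter fun α => 0 < ⟪α, v⟫).filter (fun a => Simple Δμ v a)
    with hSdef
  have hSsimple : ∀ a ∈ S, Simple Δμ v a := fun a ha => (mem_filter.mp ha).2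
  have hSΔ : ∀ a ∈ S, a ∈ Δ := fun a ha =>
    (mem_filter.mp (mem_filter.mp (mem_filter.mp ha).1).1).1
  have hSμ : ∀ a ∈ S, ⟪a, μ⟫ = 0 := fun a ha =>
    (mem_filter.mp (mem_filter.mp (mem_filter.mp ha).1).1).2
  have hSv : ∀ a ∈ S, 0 < ⟪a, v⟫ := fun a ha => (mem_filter.mp (mem_filter.mp ha).1).2
  set K : Submodule ℝ E := Submodule.span ℝ (S : Set E) with hKdef
  have hspanle : ∀ β ∈ Δμ, 0 < ⟪β, v⟫ → β ∈ K := by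
    intro β hβ hbv
    have h1 := hΔμ.pos_mem_span β hβ hbv
    refine Submodule.span_mono ?_ h1
    intro a ha
    exact Finset.mem_coe.mpr (mem_filter.mpr ⟨mem_filter.mpr ⟨ha.1, ha.2.1⟩, ha⟩)
  have hρμK : ρμ ∈ K := by
    rw [hρμdef]
    refine Submodule.smul_mem _ _ (Submodule.sum_mem _ ?_)
    intro β hβ
    exact hspanle β (mem_filter.mp hβ).1 (mem_filter.mp hβ).2
  haveI : CompleteSpace K := FiniteDimensional.complete ℝ K
  set p : E := (K.orthogonalProjectionOnto lam : E) with hpdef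
  have hpK : p ∈ K := Submodule.coe_mem _
  have hlamp : lam - p ∈ Kᗮ := Submodule.sub_starProjection_mem_orthogonal lam
  have hμK : μ ∈ Kᗮ := by
    rw [Submodule.mem_orthogonal]
    intro z hz
    obtain ⟨f, -, hf⟩ := Submodule.mem_span_finset.mp hz
    rw [← hf, sum_inner (𝕜 := ℝ)]
    refine Finset.sum_eq_zero fun a ha => ?_
    rw [real_inner_smul_left, hSμ a ha, mul_zero]
  set u : E := μ - (lam - p) with hudef
  have huO : u ∈ Kᗮ := Submodule.sub_mem _ hμK hlamp
  have hbu : μ - lam = u - p := by rw [hudef]; abel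
  have huz : ∀ z ∈ K, ⟪u, z⟫ = 0 := by
    intro z hz
    rw [real_inner_comm]
    exact (Submodule.mem_orthogonal K u).mp huO z hz
  have hup : ⟪u, p⟫ = 0 := huz p hpK
  have hpa : ∀ a ∈ S, ⟪p, a⟫ = ⟪lam, a⟫ := by
    intro a ha
    have haK : a ∈ K := Submodule.subset_span (Finset.mem_coe.mpr ha)
    have h0 : ⟪a, lam - p⟫ = 0 := (Submodule.mem_orthogonal K (lam - p)).mp hlamp a haK
    rw [inner_sub_right] at h0
    have e1 : ⟪p, a⟫ = ⟪a, p⟫ := real_inner_comm a p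
    have e2 : ⟪lam, a⟫ = ⟪a, lam⟫ := real_inner_comm a lam
    linarith
  have hpa2 : ∀ a ∈ S, (2:ℝ)⁻¹ * ⟪a, a⟫ ≤ ⟪p, a⟫ := by
    intro a ha
    rw [hpa a ha]
    exact hlam a (hSΔ a ha) (hSv a ha)
  have hpapos : ∀ a ∈ S, 0 < ⟪p, a⟫ := by
    intro a ha
    have h1 := h.ipos (hSΔ a ha)
    have h2 := hpa2 a ha
    linarith
  have hρa : ∀ a ∈ S, ⟪ρμ, a⟫ = (2:ℝ)⁻¹ * ⟪a, a⟫ := by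
    intro a ha
    rw [hρμdef, real_inner_smul_left, sum_inner (𝕜 := ℝ),
      hΔμ.sum_pos_inner_simple hvμ (hSsimple a ha)]
  set y : E := p - ρμ with hydef
  have hyK : y ∈ K := Submodule.sub_mem _ hpK hρμK
  have hydom : ∀ a ∈ S, 0 ≤ ⟪y, a⟫ := by
    intro a ha
    rw [hydef, inner_sub_left, hρa a ha]
    linarith [hpa2 a ha]
  have hob : ∀ a ∈ S, ∀ b ∈ S, a ≠ b → ⟪a, b⟫ ≤ 0 := fun a ha b hb hne =>
    hΔμ.obtuse hvμ (hSsimple a ha) (hSsimple b hb) hne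
  obtain ⟨c, hc0, hcy⟩ := stieltjes S hob y hyK hydom
  have hpy : ⟪p, y⟫ = ∑ a ∈ S, c a * ⟪p, a⟫ := by
    rw [hcy, inner_sum (𝕜 := ℝ)]
    exact Finset.sum_congr rfl fun a _ => real_inner_smul_right p a (c a)
  have hpy0 : 0 ≤ ⟪p, y⟫ := by
    rw [hpy]
    exact Finset.sum_nonneg fun a ha => mul_nonneg (hc0 a ha) (hpapos a ha).le
  have hb2 : ‖μ - lam‖ ^ 2 = ‖u‖ ^ 2 + ‖p‖ ^ 2 := by
    rw [hbu, norm_sub_sq_real, hup]; ring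
  have hbρ : ⟪μ - lam, ρμ⟫ = -⟪p, ρμ⟫ := by
    rw [hbu, inner_sub_left, huz ρμ hρμK]; ring
  have hpρ : ⟪p, ρμ⟫ = ‖p‖ ^ 2 - ⟪p, y⟫ := by
    have hρeq : ρμ = p - y := by rw [hydef]; abel
    rw [hρeq, inner_sub_right, real_inner_self_eq_norm_sq]
  have hmain : ‖μ - lam‖ ^ 2 + ⟪μ - lam, ρμ⟫ = ‖u‖ ^ 2 + ⟪p, y⟫ := by
    rw [hb2, hbρ, hpρ]; ring
  refine ⟨?_, ?_, ?_⟩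
  · rw [hmain]
    have := sq_nonneg ‖u‖
    linarith
  · have hρy0 : 0 ≤ ⟪ρμ, y⟫ := by
      rw [hcy, inner_sum (𝕜 := ℝ)]
      refine Finset.sum_nonneg fun a ha => ?_
      rw [real_inner_smul_right, hρa a ha]
      have h1 := h.ipos (hSΔ a ha)
      have h2 := hc0 a ha
      nlinarith
    have hpnorm : ‖ρμ‖ ^ 2 ≤ ‖p‖ ^ 2 := by
      have hpeq : p = ρμ + y := by rw [hydef]; abel
      have h3 := sq_nonneg ‖y‖
      rw [hpeq, norm_add_sq_real]
      linarith
    rw [hb2]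
    have := sq_nonneg ‖u‖
    linarith
  · intro heq
    rw [hmain] at heq
    have hu2 : ‖u‖ ^ 2 = 0 := by
      have := sq_nonneg ‖u‖
      linarith
    have hu0 : u = 0 := by
      have h5 : ‖u‖ = 0 := (pow_eq_zero_iff two_ne_zero).mp hu2
      exact norm_eq_zero.mp h5
    have hpyz : ⟪p, y⟫ = 0 := by linarith [sq_nonneg ‖u‖]
    have hterm := (Finset.sum_eq_zero_iff_of_nonneg
      (fun a ha => mul_nonneg (hc0 a ha) (hpapos a ha).le)).mp (by rw [← hpy]; exact hpyz)
    have hy0 : y = 0 := by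
      rw [hcy]
      refine Finset.sum_eq_zero fun a ha => ?_
      have hca : c a = 0 := by
        rcases mul_eq_zero.mp (hterm a ha) with h2 | h2
        · exact h2
        · exact absurd h2 (hpapos a ha).ne'
      rw [hca, zero_smul]
    have hpρμ : p = ρμ := by
      have h6 : p - ρμ = 0 := by rw [← hydef]; exact hy0
      exact sub_eq_zero.mp h6
    have h7 : μ - lam = -ρμ := by rw [hbu, hu0, hpρμ, zero_sub]
    have h8 : μ = -ρμ + lam := sub_eq_iff_eq_add.mp h7
    rw [h8]
    abel

end Magical

open Magical

theorem magical_inequality_trace_form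
    {E : Type*} [NormedAddCommGroup E] [InnerProductSpace ℝ E] [FiniteDimensional ℝ E]
    (Δ : Finset E)
    (hΔ0 : (0 : E) ∉ Δ)
    (hΔred : ∀ α ∈ Δ, ∀ t : ℝ, t • α ∈ Δ → t = 1 ∨ t = -1)
    (hΔrefl : ∀ α ∈ Δ, ∀ β ∈ Δ, β - (2 * ⟪β, α⟫ / ⟪α, α⟫) • α ∈ Δ)
    (hΔcrys : ∀ α ∈ Δ, ∀ β ∈ Δ, ∃ n : ℤ, 2 * ⟪β, α⟫ / ⟪α, α⟫ = (n : ℝ))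
    (v : E) (hv : ∀ α ∈ Δ, ⟪α, v⟫ ≠ 0)
    (Δpos : Finset E) (hΔpos : Δpos = Δ.filter (fun α => 0 < ⟪α, v⟫))
    (ρ : E) (hρ : ρ = (2 : ℝ)⁻¹ • ∑ α ∈ Δpos, α)    (lam μ : E)
    (hlam : ∀ α ∈ Δpos, 0 ≤ ⟪lam - ρ, α⟫)
    (ρμ : E) (hρμ : ρμ = (2 : ℝ)⁻¹ • ∑ α ∈ Δpos.filter (fun α => ⟪α, μ⟫ = 0), α)
    (ρlam : E) (hρlam : ρlam = (2 : ℝ)⁻¹ • ∑ α ∈ Δ.filter (fun α => 0 < ⟪α, lam⟫), α)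
    (ρμD : E) (hρμD : ρμD = (2 : ℝ)⁻¹ • ∑ α ∈ Δ.filter (fun α => 0 < ⟪α, μ⟫), α)
    (b : E) (hb : b = μ - lam) :
    ‖b‖ ^ 2 ≥ (2 : ℝ)⁻¹ * ∑ α ∈ Δpos.filter (fun α => ⟪α, μ⟫ = 0), |⟪b, α⟫| ∧
    (‖b‖ ^ 2 = (2 : ℝ)⁻¹ * ∑ α ∈ Δpos.filter (fun α => ⟪α, μ⟫ = 0), |⟪b, α⟫| →
      (∀ α ∈ Δpos, 0 ≤ ⟪μ, α⟫) ∧ lam - ρlam = μ - ρμD ∧ lam = μ + ρμ) := by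
  classical
  subst hΔpos hρ hρμ hρlam hρμD hb
  have h : Magical.RS Δ := ⟨hΔ0, hΔred, hΔrefl, hΔcrys⟩
  have hdom : ∀ α ∈ Δ, 0 < ⟪α, v⟫ → (2:ℝ)⁻¹ * ⟪α, α⟫ ≤ ⟪lam, α⟫ := by
    intro α hα hpos
    have h1 := h.sum_pos_inner_ge hv hα hpos
    have h2 := hlam α (mem_filter.mpr ⟨hα, hpos⟩)
    rw [inner_sub_left, real_inner_smul_left, sum_inner (𝕜 := ℝ)] at h2
    linarith
  have hfilter : (Δ.filter fun α => 0 < ⟪α, v⟫).filter (fun α => ⟪α, μ⟫ = 0)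
      = (Δ.filter fun α => ⟪α, μ⟫ = 0).filter (fun α => 0 < ⟪α, v⟫) :=
    Finset.filter_comm _ _ _
  rw [hfilter]
  obtain ⟨hineq, hFF, heqc⟩ := h.core hv lam hdom μ
  set Δμp := (Δ.filter fun α => ⟪α, μ⟫ = 0).filter (fun α => 0 < ⟪α, v⟫) with hΔμpdef
  set ρμ' : E := (2:ℝ)⁻¹ • ∑ α ∈ Δμp, α with hρμ'def
  have hposlam : ∀ β ∈ Δ, 0 < ⟪β, v⟫ → 0 < ⟪β, lam⟫ := by
    intro β hβ hb
    have h1 := hdom β hβ hb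
    have h2 := h.ipos hβ
    have h3 : 0 < ⟪lam, β⟫ := by linarith
    rwa [real_inner_comm] at h3
  have hbα : ∀ α ∈ Δμp, |⟪μ - lam, α⟫| = -⟪μ - lam, α⟫ := by
    intro α hα
    rw [hΔμpdef, mem_filter, mem_filter] at hα
    obtain ⟨⟨hαΔ, hαμ⟩, hαv⟩ := hα
    have h3 : ⟪μ - lam, α⟫ = -⟪lam, α⟫ := by
      rw [inner_sub_left]
      have h4 : ⟪μ, α⟫ = 0 := by rw [real_inner_comm]; exact hαμ
      rw [h4]; ring
    have h4 : 0 < ⟪lam, α⟫ := by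
      have := h.ipos hαΔ
      have := hdom α hαΔ hαv
      linarith
    exact abs_of_nonpos (by rw [h3]; linarith)
  have hRHS : (2:ℝ)⁻¹ * ∑ α ∈ Δμp, |⟪μ - lam, α⟫| = -⟪μ - lam, ρμ'⟫ := by
    rw [Finset.sum_congr rfl hbα, hρμ'def, real_inner_smul_right, inner_sum (𝕜 := ℝ),
      Finset.sum_neg_distrib]
    ring
  constructor
  · rw [ge_iff_le, hRHS]
    linarith
  · intro heq
    rw [hRHS] at heq
    have heq0 : ‖μ - lam‖ ^ 2 + ⟪μ - lam, ρμ'⟫ = 0 := by linarith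
    have hlamμ : lam = μ + ρμ' := heqc heq0
    have hμdom : ∀ α ∈ Δ, 0 < ⟪α, v⟫ → 0 ≤ ⟪μ, α⟫ := by
      by_contra hcon
      push_neg at hcon
      obtain ⟨α, hαΔ, hαv, hμα⟩ := hcon
      have hαα := h.ipos hαΔ
      have hlama : 0 < ⟪lam, α⟫ := by
        have := hdom α hαΔ hαv
        linarith
      set c : ℝ := 2 * ⟪μ, α⟫ / ⟪α, α⟫ with hcdef
      have hcneg : c < 0 := div_neg_of_neg_of_pos (by linarith) hαα
      set μ'' : E := sA α μ with hμ''def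
      have hlt : ‖μ'' - lam‖ ^ 2 < ‖μ - lam‖ ^ 2 := by
        have h1 : μ'' - lam = (μ - lam) - c • α := by
          rw [hμ''def, sA, hcdef]; abel
        have hca : c * ⟪α, α⟫ = 2 * ⟪μ, α⟫ := by
          rw [hcdef]; field_simp
        have hnc : ‖c • α‖ ^ 2 = c ^ 2 * ⟪α, α⟫ := by
          rw [norm_smul, mul_pow, Real.norm_eq_abs, sq_abs, real_inner_self_eq_norm_sq]
        have hexp : ‖(μ - lam) - c • α‖ ^ 2
            = ‖μ - lam‖ ^ 2 - 2 * (c * (⟪μ, α⟫ - ⟪lam, α⟫)) + c ^ 2 * ⟪α, α⟫ := by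
          rw [norm_sub_sq_real, real_inner_smul_right, inner_sub_left, hnc]
        have hsq : c ^ 2 * ⟪α, α⟫ = 2 * c * ⟪μ, α⟫ := by
          rw [pow_two, mul_assoc, hca]; ring
        rw [h1, hexp, hsq]
        nlinarith [mul_pos (neg_pos.mpr hcneg) hlama]
      have hb1 : μ - lam = -ρμ' := by rw [hlamμ]; abel
      have hbn : ‖μ - lam‖ ^ 2 = ‖ρμ'‖ ^ 2 := by rw [hb1, norm_neg]
      obtain ⟨-, hF2, -⟩ := h.core hv lam hdom μ''
      set w : E := sA α v with hwdef
      have hkeyw : ∀ x : E, ⟪x, w⟫ = ⟪sA α x, v⟫ := fun x => (sA_adjoint α x v).symm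
      have hregw : ∀ γ ∈ (Δ.filter fun γ' => ⟪γ', μ⟫ = 0), ⟪γ, w⟫ ≠ 0 := by
        intro γ hγ
        rw [hkeyw]
        exact hv _ (h.rfl' α hαΔ γ (mem_filter.mp hγ).1)
      have hregv : ∀ γ ∈ (Δ.filter fun γ' => ⟪γ', μ⟫ = 0), ⟪γ, v⟫ ≠ 0 :=
        fun γ hγ => hv γ (mem_filter.mp hγ).1
      have hsum2 : ∑ β ∈ (Δ.filter fun β => ⟪β, μ''⟫ = 0).filter (fun β => 0 < ⟪β, v⟫), β
          = sA α (∑ γ ∈ (Δ.filter fun γ => ⟪γ, μ⟫ = 0).filter (fun γ => 0 < ⟪γ, w⟫), γ) := by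
        rw [← sum_sA]
        refine (Finset.sum_nbij' (i := fun γ => sA α γ) (j := fun γ => sA α γ)
          ?_ ?_ ?_ ?_ ?_).symm
        · intro γ hγ
          simp only [mem_filter] at hγ ⊢
          refine ⟨⟨h.rfl' α hαΔ γ hγ.1.1, ?_⟩, ?_⟩
          · rw [hμ''def, inner_sA_sA hαα.ne']
            exact hγ.1.2
          · rw [← hkeyw]
            exact hγ.2
        · intro β hβ
          simp only [mem_filter] at hβ ⊢
          refine ⟨⟨h.rfl' α hαΔ β hβ.1.1, ?_⟩, ?_⟩
          · have h5 : ⟪sA α β, μ⟫ = ⟪β, μ''⟫ := by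
              rw [hμ''def]
              exact sA_adjoint α β μ
            rw [h5]
            exact hβ.1.2
          · rw [hkeyw, sA_sA hαα.ne']
            exact hβ.2
        · intro γ _
          exact sA_sA hαα.ne' γ
        · intro γ _
          exact sA_sA hαα.ne' γ
        · intro γ _
          rfl
      have hnormeq : ‖ρμ'‖
          = ‖(2:ℝ)⁻¹ • ∑ β ∈ (Δ.filter fun β => ⟪β, μ''⟫ = 0).filter
              (fun β => 0 < ⟪β, v⟫), β‖ := by
        rw [hρμ'def, hsum2, norm_smul, norm_smul, norm_sA hαα.ne', hΔμpdef]
        congr 1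
        exact ((h.sub μ).rho_norm_eq _ v w hregv hregw rfl)
      have hcontr : ‖ρμ'‖ ^ 2 ≤ ‖μ'' - lam‖ ^ 2 := by
        rw [hnormeq]
        exact hF2
      linarith
    refine ⟨?_, ?_, hlamμ⟩
    · intro α hα
      rw [mem_filter] at hα
      exact hμdom α hα.1 hα.2
    · have hlamreg : Δ.filter (fun α => 0 < ⟪α, lam⟫) = Δ.filter (fun α => 0 < ⟪α, v⟫) := by
        ext α
        simp only [mem_filter, and_congr_right_iff]
        intro hαΔ
        constructor
        · intro hpos
          by_contra hcon
          have h2 : 0 < ⟪-α, v⟫ := by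
            rw [inner_neg_left]
            rcases (hv α hαΔ).lt_or_gt with h3 | h3
            · linarith
            · exact absurd h3 hcon
          have h4 := hposlam (-α) (h.neg_mem hαΔ) h2
          rw [inner_neg_left] at h4
          linarith
        · exact hposlam α hαΔ
      have hμreg : Δ.filter (fun α => 0 < ⟪α, μ⟫)
          = (Δ.filter fun α => 0 < ⟪α, v⟫).filter (fun α => ¬ ⟪α, μ⟫ = 0) := by
        ext α
        simp only [mem_filter]
        constructor
        · rintro ⟨hαΔ, hpos⟩
          have hαv : 0 < ⟪α, v⟫ := by
            by_contra hcon
            have h2 : 0 < ⟪-α, v⟫ := by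
              rw [inner_neg_left]
              rcases (hv α hαΔ).lt_or_gt with h3 | h3
              · linarith
              · exact absurd h3 hcon
            have h4 := hμdom (-α) (h.neg_mem hαΔ) h2
            rw [inner_neg_right] at h4
            have h5 : ⟪μ, α⟫ = ⟪α, μ⟫ := real_inner_comm α μ
            linarith
          exact ⟨⟨hαΔ, hαv⟩, by linarith⟩
        · rintro ⟨⟨hαΔ, hαv⟩, hne⟩
          refine ⟨hαΔ, ?_⟩
          have h4 := hμdom α hαΔ hαv
          have h5 : ⟪μ, α⟫ = ⟪α, μ⟫ := real_inner_comm α μ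
          rcases lt_or_eq_of_le h4 with h6 | h6
          · linarith
          · exact absurd (by linarith : ⟪α, μ⟫ = 0) hne
      have hsplit : ∑ α ∈ (Δ.filter fun α => 0 < ⟪α, v⟫).filter (fun α => ⟪α, μ⟫ = 0), α
          + ∑ α ∈ (Δ.filter fun α => 0 < ⟪α, v⟫).filter (fun α => ¬ ⟪α, μ⟫ = 0), α
          = ∑ α ∈ Δ.filter fun α => 0 < ⟪α, v⟫, α :=
        Finset.sum_filter_add_sum_filter_not _ _ _
      have hsub2 : ∑ α ∈ (Δ.filter fun α => 0 < ⟪α, v⟫).filter (fun α => ¬ ⟪α, μ⟫ = 0), α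
          = (∑ α ∈ Δ.filter fun α => 0 < ⟪α, v⟫, α) - ∑ α ∈ Δμp, α := by
        rw [hfilter] at hsplit
        rw [eq_sub_iff_add_eq, add_comm]
        exact hsplit
      rw [hlamreg, hμreg, hsub2, hlamμ, smul_sub]
      rw [hρμ'def]
      abel
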